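/- Let 0 < α < π/2 and let z be a complex number with z ≠ 0 and |arg(z)| < α. Then |1 + e^{−z}| ≥ 1 − e^{−π/(2·tan(α))}. -/

import Mathlib

open Complex Real

theorem abs_one_add_exp_neg_ge (α : ℝ) (hα : 0 < α) (hα' : α < Real.pi / 2)
    (z : ℂ) (hz : z ≠ 0) (harg : |Complex.arg z| < α) :
    ‖1 + Complex.exp (-z)‖ ≥ 1 - Real.exp (-Real.pi / (2 * Real.tan α)) := by
  have htan : 0 < Real.tan α := Real.tan_pos_of_pos_of_lt_pi_div_two hα hα'
  have hre : 0 < z.re := by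
    rcases (Complex.abs_arg_lt_pi_div_two_iff (z := z)).1 (harg.trans hα') with h | h
    · exact h
    · exact absurd h hz
  rcases le_or_gt (Real.pi / (2 * Real.tan α)) z.re with hcase | hcase
  · have h1 : (1 : ℝ) - ‖Complex.exp (-z)‖ ≤ ‖1 + Complex.exp (-z)‖ := by
      have := norm_add_le (1 + Complex.exp (-z)) (-Complex.exp (-z))
      simp at this
      linarith [this]
    have h2 : ‖Complex.exp (-z)‖ = Real.exp (-z.re) := by
      rw [Complex.norm_exp]; simp
    have h3 : Real.exp (-z.re) ≤ Real.exp (-Real.pi / (2 * Real.tan α)) := by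
      apply Real.exp_le_exp.2
      rw [neg_div]
      linarith
    rw [h2] at h1
    linarith
  · have htanarg : Real.tan (Complex.arg z) = z.im / z.re := Complex.tan_arg z
    have habs : |Real.tan (Complex.arg z)| = Real.tan |Complex.arg z| := by
      rcases abs_cases (Complex.arg z) with ⟨h, hpos⟩ | ⟨h, hneg⟩
      · rw [h, _root_.abs_of_nonneg (Real.tan_nonneg_of_nonneg_of_le_pi_div_two hpos (by rw [← h]; linarith))]
      · rw [h, Real.tan_neg, _root_.abs_of_nonpos]
        apply Real.tan_nonpos_of_nonpos_of_neg_pi_div_two_le hneg.le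
        have : -Complex.arg z < Real.pi / 2 := by rw [← h]; linarith
        linarith
    have htlt : Real.tan |Complex.arg z| < Real.tan α :=
      Real.tan_lt_tan_of_nonneg_of_lt_pi_div_two (abs_nonneg _) hα' harg
    have him' : |z.im| < Real.tan α * z.re := by
      have : |z.im / z.re| < Real.tan α := by rw [← htanarg, habs]; exact htlt
      rw [abs_div, abs_of_pos hre, div_lt_iff₀ hre] at this
      linarith
    have him : |z.im| < Real.pi / 2 := by
      have : Real.tan α * z.re < Real.tan α * (Real.pi / (2 * Real.tan α)) := by
        exact mul_lt_mul_of_pos_left hcase htan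
      have heq : Real.tan α * (Real.pi / (2 * Real.tan α)) = Real.pi / 2 := by
        field_simp
      linarith
    have hcos : 0 < Real.cos z.im :=
      Real.cos_pos_of_mem_Ioo ⟨by linarith [(abs_lt.1 him).1], (abs_lt.1 him).2⟩
    have hre1 : (1 : ℝ) ≤ (1 + Complex.exp (-z)).re := by
      have h5 : (Complex.exp (-z)).re = Real.exp (-z.re) * Real.cos (-z.im) := by
        rw [Complex.exp_re]; simp
      rw [Real.cos_neg] at h5
      simp [h5]
      positivity
    have := Complex.re_le_norm (1 + Complex.exp (-z))
    have hexp : 0 ≤ Real.exp (-Real.pi / (2 * Real.tan α)) := (Real.exp_pos _).le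
    linarith
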